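/- Let p : U → (ℝⁿ →ₗ[ℝ] ℝⁿ →ₗ[ℝ] ℝ) be a smooth pairing with p x nondegenerate for every x ∈ U, and let A⁺, A⁻ : U → (ℝⁿ →ₗ[ℝ] ℝⁿ →ₗ[ℝ] ℝⁿ) be smooth connection forms that are mutually dual with respect to p. Then R_{A⁺}(x)(v,w) = 0 for all x ∈ U and v, w ∈ ℝⁿ if and only if R_{A⁻}(x)(v,w) = 0 for all x ∈ U and v, w ∈ ℝⁿ; i.e. A⁺ is curvature-free iff A⁻ is curvature-free. (Paper's Corollary 3.18, in a trivialization.) -/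

import Mathlib

noncomputable section

open Set

/-- ℝⁿ. -/
abbrev Vn (n : ℕ) : Type := Fin n → ℝ

/-- Pairings (fiber metrics pairing `E⁺` with `E⁻`) on the trivialized bundle. -/
abbrev Pairn (n : ℕ) : Type := Vn n →L[ℝ] Vn n →L[ℝ] ℝ

/-- Connection forms on the trivialized bundle. -/
abbrev Connn (n : ℕ) : Type := Vn n →L[ℝ] Vn n →L[ℝ] Vn n

/-- Bundle maps `TU → E±` in the trivialization. -/
abbrev Bdln (n : ℕ) : Type := Vn n →L[ℝ] Vn n

/-- Covariant derivative of the section `ν` along the vector field `X`,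
for the connection with connection form `A`. -/
def cov {n : ℕ} (A : Vn n → Connn n) (X ν : Vn n → Vn n) (x : Vn n) : Vn n :=
  fderiv ℝ ν x (X x) + A x (X x) (ν x)

/-- Lie bracket of vector fields on an open set of ℝⁿ. -/
def lieB {n : ℕ} (X Y : Vn n → Vn n) (x : Vn n) : Vn n :=
  fderiv ℝ Y x (X x) - fderiv ℝ X x (Y x)

/-- The section `Φ±Y : x ↦ Φ± x (Y x)`. -/
def secPhi {n : ℕ} (Φ : Vn n → Bdln n) (Y : Vn n → Vn n) : Vn n → Vn n :=
  fun x => Φ x (Y x)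

/-- The induced (possibly degenerate) metric `h x y z = 2 p x (Φ⁺ x y) (Φ⁻ x z)`. -/
def hmet {n : ℕ} (p : Vn n → Pairn n) (Φp Φm : Vn n → Bdln n) (x y z : Vn n) : ℝ :=
  2 * p x (Φp x y) (Φm x z)

/-- The generalized Amari–Chentsov cubic tensor. -/
def Ctensor {n : ℕ} (p : Vn n → Pairn n) (Ap Am : Vn n → Connn n)
    (Φp Φm : Vn n → Bdln n) (X Y Z : Vn n → Vn n) (x : Vn n) : ℝ :=
  -2 * (p x (cov Ap X (secPhi Φp Y) x) (Φm x (Z x))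
        - p x (Φp x (Z x)) (cov Am X (secPhi Φm Y) x))

/-- The relative torsion `T(X,Y) = ∇_X(ΦY) − ∇_Y(ΦX) − Φ[X,Y]`. -/
def Ttor {n : ℕ} (A : Vn n → Connn n) (Φ : Vn n → Bdln n)
    (X Y : Vn n → Vn n) (x : Vn n) : Vn n :=
  cov A X (secPhi Φ Y) x - cov A Y (secPhi Φ X) x - Φ x (lieB X Y x)

/-- The Kossowski pseudo-connection. -/
def Koss {n : ℕ} (p : Vn n → Pairn n) (Φp Φm : Vn n → Bdln n)
    (X Y Z : Vn n → Vn n) (x : Vn n) : ℝ :=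
  fderiv ℝ (fun y => p y (Φp y (Y y)) (Φm y (Z y))) x (X x)
  + fderiv ℝ (fun y => p y (Φp y (Z y)) (Φm y (X y))) x (Y x)
  - fderiv ℝ (fun y => p y (Φp y (X y)) (Φm y (Y y))) x (Z x)
  - p x (Φp x (X x)) (Φm x (lieB Y Z x))
  + p x (Φp x (Y x)) (Φm x (lieB Z X x))
  + p x (Φp x (Z x)) (Φm x (lieB X Y x))

/-- The curvature of a connection form `A` at `x` in directions `v`, `w`. -/
def curvA {n : ℕ} (A : Vn n → Connn n) (x v w : Vn n) : Vn n →L[ℝ] Vn n :=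
  fderiv ℝ A x v w - fderiv ℝ A x w v + (A x v).comp (A x w) - (A x w).comp (A x v)

set_option maxHeartbeats 1000000 in
lemma keyIdentity {n : ℕ} (U : Set (Vn n)) (hUopen : IsOpen U)
    (p : Vn n → Pairn n) (hpsmooth : ContDiffOn ℝ (⊤ : ℕ∞) p U)
    (Ap Am : Vn n → Connn n)
    (hApsmooth : ContDiffOn ℝ (⊤ : ℕ∞) Ap U) (hAmsmooth : ContDiffOn ℝ (⊤ : ℕ∞) Am U)
    (hdual : ∀ x ∈ U, ∀ v a b : Vn n,
      fderiv ℝ p x v a b = p x (Ap x v a) b + p x a (Am x v b))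
    (x : Vn n) (hx : x ∈ U) (v w a b : Vn n) :
    p x ((fderiv ℝ Ap x v w - fderiv ℝ Ap x w v
        + (Ap x v).comp (Ap x w) - (Ap x w).comp (Ap x v)) a) b
    + p x a ((fderiv ℝ Am x v w - fderiv ℝ Am x w v
        + (Am x v).comp (Am x w) - (Am x w).comp (Am x v)) b) = 0 := by
  have hxn : U ∈ nhds x := hUopen.mem_nhds hx
  have hpx : ContDiffAt ℝ (⊤ : ℕ∞) p x := hpsmooth.contDiffAt hxn
  have hApx : ContDiffAt ℝ (⊤ : ℕ∞) Ap x := hApsmooth.contDiffAt hxn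
  have hAmx : ContDiffAt ℝ (⊤ : ℕ∞) Am x := hAmsmooth.contDiffAt hxn
  have h1top : ((⊤ : ℕ∞) : WithTop ℕ∞) ≠ 0 := by simp
  have hdp : HasFDerivAt p (fderiv ℝ p x) x :=
    (hpx.differentiableAt h1top).hasFDerivAt
  have hApd : HasFDerivAt Ap (fderiv ℝ Ap x) x :=
    (hApx.differentiableAt h1top).hasFDerivAt
  have hAmd : HasFDerivAt Am (fderiv ℝ Am x) x :=
    (hAmx.differentiableAt h1top).hasFDerivAt
  set g : Vn n → ℝ := fun y => p y a b with hgdef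
  have hgx : ContDiffAt ℝ (⊤ : ℕ∞) g x :=
    (hpx.clm_apply contDiffAt_const).clm_apply contDiffAt_const
  have hgfd : ∀ y ∈ U, ∀ v' : Vn n, fderiv ℝ g y v' = fderiv ℝ p y v' a b := by
    intro y hy v'
    have hpy : ContDiffAt ℝ (⊤ : ℕ∞) p y := hpsmooth.contDiffAt (hUopen.mem_nhds hy)
    have hdpy : HasFDerivAt p (fderiv ℝ p y) y := (hpy.differentiableAt h1top).hasFDerivAt
    rw [((hdpy.clm_apply (hasFDerivAt_const a y)).clm_apply (hasFDerivAt_const b y)).fderiv]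
    simp
  have hqx : ContDiffAt ℝ (⊤ : ℕ∞) (fderiv ℝ g) x := by
    apply hgx.fderiv_right
    exact_mod_cast (le_top : ((⊤ : ℕ∞) + 1 : ℕ∞) ≤ ⊤)
  have hqd : HasFDerivAt (fderiv ℝ g) (fderiv ℝ (fderiv ℝ g) x) x :=
    (hqx.differentiableAt h1top).hasFDerivAt
  have hsymm : IsSymmSndFDerivAt ℝ g x := by
    apply hgx.isSymmSndFDerivAt
    rw [minSmoothness_of_isRCLikeNormedField]
    exact WithTop.coe_le_coe.mpr le_top
  have main : ∀ v' w' : Vn n, fderiv ℝ (fderiv ℝ g) x w' v' =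
      p x (Ap x w' (Ap x v' a)) b + p x (Ap x v' a) (Am x w' b)
      + p x (fderiv ℝ Ap x w' v' a) b
      + p x (Ap x w' a) (Am x v' b) + p x a (Am x w' (Am x v' b))
      + p x a (fderiv ℝ Am x w' v' b) := by
    intro v' w'
    have hG := hqd.clm_apply (hasFDerivAt_const v' x)
    -- the RHS function
    have hv1 := (hApd.clm_apply (hasFDerivAt_const v' x)).clm_apply
        (hasFDerivAt_const a x)
    have h1 := (hdp.clm_apply hv1).clm_apply (hasFDerivAt_const b x)
    have hv2 := (hAmd.clm_apply (hasFDerivAt_const v' x)).clm_apply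
        (hasFDerivAt_const b x)
    have h2 := (hdp.clm_apply (hasFDerivAt_const a x)).clm_apply hv2
    have hsum := h1.add h2
    have hEq : (fun y => fderiv ℝ g y v') =ᶠ[nhds x]
        (fun y => p y (Ap y v' a) b + p y a (Am y v' b)) := by
      filter_upwards [hxn] with y hy
      rw [hgfd y hy v']
      exact hdual y hy v' a b
    have hfd : fderiv ℝ (fun y => fderiv ℝ g y v') x
        = fderiv ℝ (fun y => p y (Ap y v' a) b + p y a (Am y v' b)) x :=
      hEq.fderiv_eq
    have e1 := hG.fderiv
    have e2 := hsum.fderiv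
    have := e1.symm.trans (hfd.trans e2)
    have happ := congrFun (congrArg DFunLike.coe this) w'
    simp only [ContinuousLinearMap.comp_zero, ContinuousLinearMap.zero_comp,
      ContinuousLinearMap.add_apply, ContinuousLinearMap.flip_apply,
      ContinuousLinearMap.zero_apply, ContinuousLinearMap.comp_apply,
      ContinuousLinearMap.coe_comp', Function.comp_apply,
      ContinuousLinearMap.flip_apply, zero_add, add_zero] at happ
    rw [happ]
    rw [hdual x hx w' (Ap x v' a) b, hdual x hx w' a (Am x v' b)]
    ring
  have hs := hsymm v w
  have hvw := main v w
  have hwv := main w v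
  have hs' : fderiv ℝ (fderiv ℝ g) x w v = fderiv ℝ (fderiv ℝ g) x v w := by
    rw [hsymm w v]
  simp only [ContinuousLinearMap.sub_apply, ContinuousLinearMap.add_apply,
    ContinuousLinearMap.comp_apply, map_sub, map_add]
  linarith [hvw, hwv, hs']

/-- Paper's Corollary 3.18 (in a trivialization): for a nondegenerate smooth pairing
`p` and mutually dual smooth connection forms `A⁺`, `A⁻`, the connection `A⁺` is
curvature-free on `U` if and only if `A⁻` is curvature-free on `U`. -/
theorem statement12 {n : ℕ} (U : Set (Vn n)) (hUopen : IsOpen U)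
    (p : Vn n → Pairn n) (hpsmooth : ContDiffOn ℝ (⊤ : ℕ∞) p U)
    (hpnondeg : ∀ x ∈ U, ∀ a : Vn n, (∀ b : Vn n, p x a b = 0) → a = 0)
    (hpnondeg' : ∀ x ∈ U, ∀ b : Vn n, (∀ a : Vn n, p x a b = 0) → b = 0)
    (Ap Am : Vn n → Connn n)
    (hApsmooth : ContDiffOn ℝ (⊤ : ℕ∞) Ap U) (hAmsmooth : ContDiffOn ℝ (⊤ : ℕ∞) Am U)
    (hdual : ∀ x ∈ U, ∀ v a b : Vn n,
      fderiv ℝ p x v a b = p x (Ap x v a) b + p x a (Am x v b)) :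
    (∀ x ∈ U, ∀ v w : Vn n, curvA Ap x v w = 0) ↔
    (∀ x ∈ U, ∀ v w : Vn n, curvA Am x v w = 0) := by
  have key : ∀ x ∈ U, ∀ v w a b : Vn n,
      p x (curvA Ap x v w a) b + p x a (curvA Am x v w b) = 0 := by
    intro x hx v w a b
    exact keyIdentity U hUopen p hpsmooth Ap Am hApsmooth hAmsmooth hdual x hx v w a b
  constructor
  · intro h x hx v w
    refine ContinuousLinearMap.ext fun b => ?_
    rw [ContinuousLinearMap.zero_apply]
    apply hpnondeg' x hx
    intro a
    have hk := key x hx v w a b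
    rw [h x hx v w] at hk
    simpa using hk
  · intro h x hx v w
    refine ContinuousLinearMap.ext fun a => ?_
    rw [ContinuousLinearMap.zero_apply]
    apply hpnondeg x hx
    intro b
    have hk := key x hx v w a b
    rw [h x hx v w] at hk
    simpa using hk
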